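/- Let A ∈ ℝ^{n×n}, C ∈ ℝ^{p×n}, and let σ : ℕ → {0,1} be periodic with period s ≥ 1 (i.e., σ(t+s) = σ(t) for all t ∈ ℕ). Then the observability matrix O_σ(t) has rank strictly less than n for all t ∈ ℕ if and only if O_σ(sn) has rank strictly less than n. Moreover, for all t ≥ sn, the row span of O_σ(t) equals the row span of O_σ(sn). -/

import Mathlib

open Matrix Filter

/-- An automaton `𝒜 = (M, s)` with `N` nodes: transition matrix `M ∈ {0,1}^{N×N}`
and vector of node labels `s ∈ {0,1}^N`. -/
structure Automaton (N : ℕ) where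
  M : Matrix (Fin N) (Fin N) Bool
  s : Fin N → Bool

/-- `σ ∈ ℒ(𝒜)`: the data loss signal `σ` is admissible with respect to `𝒜`. -/
def Automaton.Admissible {N : ℕ} (𝒜 : Automaton N) (σ : ℕ → Bool) : Prop :=
  ∃ v : ℕ → Fin N, ∀ t : ℕ, 𝒜.M (v t) (v (t + 1)) = true ∧ σ t = 𝒜.s (v t)

/-- A finite word of length `r` generated by `𝒜` (only the first `r` letters of `w` matter). -/
def Automaton.AdmissibleWord {N : ℕ} (𝒜 : Automaton N) (r : ℕ) (w : ℕ → Bool) : Prop :=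
  ∃ v : ℕ → Fin N, (∀ t : ℕ, t + 1 < r → 𝒜.M (v t) (v (t + 1)) = true) ∧
    ∀ t : ℕ, t < r → w t = 𝒜.s (v t)

/-- The reverse automaton `𝒜ʳ = (Mᵀ, s)`. -/
def Automaton.rev {N : ℕ} (𝒜 : Automaton N) : Automaton N :=
  ⟨𝒜.M.transpose, 𝒜.s⟩

/-- Observability of the system `(A, C, 𝒜)`. -/
def Observable {N n p : ℕ} (A : Matrix (Fin n) (Fin n) ℝ) (C : Matrix (Fin p) (Fin n) ℝ)
    (𝒜 : Automaton N) : Prop :=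
  ∀ σ : ℕ → Bool, 𝒜.Admissible σ → ∀ x₀ : Fin n → ℝ,
    (∀ t : ℕ, σ t = true → (C * A ^ t).mulVec x₀ = 0) → x₀ = 0

/-- Practical observability of the system `(A, C, 𝒜)`. -/
def PracticallyObservable {N n p : ℕ} (A : Matrix (Fin n) (Fin n) ℝ)
    (C : Matrix (Fin p) (Fin n) ℝ) (𝒜 : Automaton N) : Prop :=
  ∃ T : ℕ, ∀ σ : ℕ → Bool, 𝒜.Admissible σ → ∀ x₀ : Fin n → ℝ,
    (∀ t : ℕ, t ≤ T → σ t = true → (C * A ^ t).mulVec x₀ = 0) → x₀ = 0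

/-- Constructibility of the system `(A, C, 𝒜)`. -/
def Constructible {N n p : ℕ} (A : Matrix (Fin n) (Fin n) ℝ) (C : Matrix (Fin p) (Fin n) ℝ)
    (𝒜 : Automaton N) : Prop :=
  ∀ σ : ℕ → Bool, 𝒜.Admissible σ → ∃ T : ℕ, ∀ x₀ : Fin n → ℝ,
    (∀ t : ℕ, t ≤ T → σ t = true → (C * A ^ t).mulVec x₀ = 0) → (A ^ T).mulVec x₀ = 0

/-- Practical constructibility of the system `(A, C, 𝒜)`. -/
def PracticallyConstructible {N n p : ℕ} (A : Matrix (Fin n) (Fin n) ℝ)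
    (C : Matrix (Fin p) (Fin n) ℝ) (𝒜 : Automaton N) : Prop :=
  ∃ T : ℕ, ∀ σ : ℕ → Bool, 𝒜.Admissible σ → ∀ x₀ : Fin n → ℝ,
    (∀ t : ℕ, t ≤ T → σ t = true → (C * A ^ t).mulVec x₀ = 0) → (A ^ T).mulVec x₀ = 0

/-- Detectability of the system `(A, C, 𝒜)`. -/
def Detectable {N n p : ℕ} (A : Matrix (Fin n) (Fin n) ℝ) (C : Matrix (Fin p) (Fin n) ℝ)
    (𝒜 : Automaton N) : Prop :=
  ∀ σ : ℕ → Bool, 𝒜.Admissible σ → ∀ x₀ : Fin n → ℝ,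
    (∀ t : ℕ, σ t = true → (C * A ^ t).mulVec x₀ = 0) →
      Tendsto (fun t : ℕ => (A ^ t).mulVec x₀) atTop (nhds 0)

/-- The observability matrix `O_σ(t) = [σ(0)C; σ(1)CA; ...; σ(t−1)CA^{t−1}]`
(blocks stacked vertically, block `i` is row-block `i`). -/
def obsMat {n p : ℕ} (A : Matrix (Fin n) (Fin n) ℝ) (C : Matrix (Fin p) (Fin n) ℝ)
    (σ : ℕ → Bool) (t : ℕ) : Matrix (Fin t × Fin p) (Fin n) ℝ :=
  fun ij k => if σ (ij.1 : ℕ) then (C * A ^ (ij.1 : ℕ)) ij.2 k else 0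

/-- State trajectory of the system `x(t+1) = A x(t) + σ(t) B u(t)`. -/
def traj {n m : ℕ} (A : Matrix (Fin n) (Fin n) ℝ) (B : Matrix (Fin n) (Fin m) ℝ)
    (σ : ℕ → Bool) (u : ℕ → Fin m → ℝ) (x₀ : Fin n → ℝ) : ℕ → Fin n → ℝ
  | 0 => x₀
  | t + 1 => A.mulVec (traj A B σ u x₀ t) + if σ t then B.mulVec (u t) else 0

/-- Controllability of the system `(A, B, 𝒜)`. -/
def Controllable {N n m : ℕ} (A : Matrix (Fin n) (Fin n) ℝ) (B : Matrix (Fin n) (Fin m) ℝ)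
    (𝒜 : Automaton N) : Prop :=
  ∀ σ : ℕ → Bool, 𝒜.Admissible σ → ∀ x₀ xf : Fin n → ℝ,
    ∃ u : ℕ → Fin m → ℝ, ∃ T : ℕ, traj A B σ u x₀ T = xf

/-- Reachability of the system `(A, B, 𝒜)`. -/
def Reachable {N n m : ℕ} (A : Matrix (Fin n) (Fin n) ℝ) (B : Matrix (Fin n) (Fin m) ℝ)
    (𝒜 : Automaton N) : Prop :=
  ∀ σ : ℕ → Bool, 𝒜.Admissible σ → ∀ xf : Fin n → ℝ,
    ∃ u : ℕ → Fin m → ℝ, ∃ T : ℕ, traj A B σ u 0 T = xf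

/-- 0-controllability of the system `(A, B, 𝒜)`. -/
def ZeroControllable {N n m : ℕ} (A : Matrix (Fin n) (Fin n) ℝ) (B : Matrix (Fin n) (Fin m) ℝ)
    (𝒜 : Automaton N) : Prop :=
  ∀ σ : ℕ → Bool, 𝒜.Admissible σ → ∀ x₀ : Fin n → ℝ,
    ∃ u : ℕ → Fin m → ℝ, ∃ T : ℕ, traj A B σ u x₀ T = 0

/-- Stabilizability of the system `(A, B, 𝒜)`. -/
def Stabilizable {N n m : ℕ} (A : Matrix (Fin n) (Fin n) ℝ) (B : Matrix (Fin n) (Fin m) ℝ)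
    (𝒜 : Automaton N) : Prop :=
  ∀ σ : ℕ → Bool, 𝒜.Admissible σ → ∀ x₀ : Fin n → ℝ,
    ∃ u : ℕ → Fin m → ℝ, Tendsto (fun t : ℕ => traj A B σ u x₀ t) atTop (nhds 0)

/-- Practical controllability of the system `(A, B, 𝒜)`. -/
def PracticallyControllable {N n m : ℕ} (A : Matrix (Fin n) (Fin n) ℝ)
    (B : Matrix (Fin n) (Fin m) ℝ) (𝒜 : Automaton N) : Prop :=
  ∃ T : ℕ, ∀ σ : ℕ → Bool, 𝒜.Admissible σ → ∀ x₀ xf : Fin n → ℝ,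
    ∃ u : ℕ → Fin m → ℝ, ∃ t : ℕ, t ≤ T ∧ traj A B σ u x₀ t = xf

/-- Practical reachability of the system `(A, B, 𝒜)`. -/
def PracticallyReachable {N n m : ℕ} (A : Matrix (Fin n) (Fin n) ℝ)
    (B : Matrix (Fin n) (Fin m) ℝ) (𝒜 : Automaton N) : Prop :=
  ∃ T : ℕ, ∀ σ : ℕ → Bool, 𝒜.Admissible σ → ∀ xf : Fin n → ℝ,
    ∃ u : ℕ → Fin m → ℝ, ∃ t : ℕ, t ≤ T ∧ traj A B σ u 0 t = xf

/-- Practical 0-controllability of the system `(A, B, 𝒜)`. -/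
def PracticallyZeroControllable {N n m : ℕ} (A : Matrix (Fin n) (Fin n) ℝ)
    (B : Matrix (Fin n) (Fin m) ℝ) (𝒜 : Automaton N) : Prop :=
  ∃ T : ℕ, ∀ σ : ℕ → Bool, 𝒜.Admissible σ → ∀ x₀ : Fin n → ℝ,
    ∃ u : ℕ → Fin m → ℝ, ∃ t : ℕ, t ≤ T ∧ traj A B σ u x₀ t = 0

/-- The reachability matrix `C_σ(t) = [σ(t−1)B, σ(t−2)AB, ..., σ(0)A^{t−1}B]`
(block-column `i` is `σ(t−1−i) Aⁱ B`). -/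
def reachMat {n m : ℕ} (A : Matrix (Fin n) (Fin n) ℝ) (B : Matrix (Fin n) (Fin m) ℝ)
    (σ : ℕ → Bool) (t : ℕ) : Matrix (Fin n) (Fin t × Fin m) ℝ :=
  fun k ij => if σ (t - 1 - (ij.1 : ℕ)) then (A ^ (ij.1 : ℕ) * B) k ij.2 else 0

/-- State trajectory of the system with varying delays
`x(t+1) = A x(t) + Σ_{t' ≤ t, t' + d(t') = t} B u(t')`. -/
def delayTraj {n m : ℕ} (A : Matrix (Fin n) (Fin n) ℝ) (B : Matrix (Fin n) (Fin m) ℝ)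
    (d : ℕ → ℕ) (u : ℕ → Fin m → ℝ) (x₀ : Fin n → ℝ) : ℕ → Fin n → ℝ
  | 0 => x₀
  | t + 1 => A.mulVec (delayTraj A B d u x₀ t) +
      ∑ t' ∈ Finset.range (t + 1), if t' + d t' = t then B.mulVec (u t') else 0

/-- Controllability of the system with varying delays `(A, B, 𝒟)`. -/
def DelayControllable {n m : ℕ} (A : Matrix (Fin n) (Fin n) ℝ) (B : Matrix (Fin n) (Fin m) ℝ)
    (𝒟 : Finset ℕ) : Prop :=
  ∀ d : ℕ → ℕ, (∀ t : ℕ, d t ∈ 𝒟) → ∀ x₀ xf : Fin n → ℝ,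
    ∃ u : ℕ → Fin m → ℝ, ∃ T : ℕ, delayTraj A B d u x₀ T = xf

/-- The controllability matrix `C̄_d(t)` of a system with varying delays: its `i`-th
block column (here indexed by `j = i - 1 : Fin t`) is `A^{t−i−d(i−1)} B` when
`i + d(i−1) ≤ t`, and the zero block otherwise. -/
def delayCtrbMat {n m : ℕ} (A : Matrix (Fin n) (Fin n) ℝ) (B : Matrix (Fin n) (Fin m) ℝ)
    (d : ℕ → ℕ) (t : ℕ) : Matrix (Fin n) (Fin t × Fin m) ℝ :=
  fun k jl => if (jl.1 : ℕ) + 1 + d (jl.1 : ℕ) ≤ t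
    then (A ^ (t - ((jl.1 : ℕ) + 1) - d (jl.1 : ℕ)) * B) k jl.2 else 0

-- The actuation signal `τ_d` of a delay signal `d`: `τ_d(t) = 1` iff there is
-- `t'` with `t' + d(t') = t`.
open Classical in
noncomputable def actuation (d : ℕ → ℕ) (t : ℕ) : Bool :=
  if ∃ t' : ℕ, t' + d t' = t then true else false


namespace PeriodicObsAux

variable {n p : ℕ} (A : Matrix (Fin n) (Fin n) ℝ) (C : Matrix (Fin p) (Fin n) ℝ) (σ : ℕ → Bool)

/-- Row block `i` of the observability matrix. -/
noncomputable def rowB (i : ℕ) : Fin p → (Fin n → ℝ) :=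
  fun r => if σ i then (C * A ^ i) r else 0

/-- Row span of the observability matrix at time `t`. -/
noncomputable def W (t : ℕ) : Submodule ℝ (Fin n → ℝ) :=
  Submodule.span ℝ (⋃ i ∈ Finset.range t, Set.range (rowB A C σ i))

lemma range_obsMat (t : ℕ) :
    Set.range (obsMat A C σ t) = ⋃ i ∈ Finset.range t, Set.range (rowB A C σ i) := by
  ext v
  simp only [Set.mem_range, Set.mem_iUnion, Finset.mem_range]
  constructor
  · rintro ⟨⟨i, r⟩, rfl⟩
    refine ⟨i, i.isLt, r, ?_⟩
    funext k
    simp only [rowB, obsMat]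
    split <;> rfl
  · rintro ⟨i, hi, r, rfl⟩
    refine ⟨⟨⟨i, hi⟩, r⟩, ?_⟩
    funext k
    simp only [rowB, obsMat]
    split <;> rfl

lemma span_range_eq_W (t : ℕ) :
    Submodule.span ℝ (Set.range (obsMat A C σ t)) = W A C σ t := by
  rw [range_obsMat]; rfl

lemma rowB_mem_W {i t : ℕ} (hi : i < t) (r : Fin p) : rowB A C σ i r ∈ W A C σ t :=
  Submodule.subset_span (Set.mem_biUnion (Finset.mem_range.mpr hi) (Set.mem_range_self r))

lemma W_mono {t t' : ℕ} (h : t ≤ t') : W A C σ t ≤ W A C σ t' := by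
  apply Submodule.span_le.mpr
  intro x hx
  simp only [Set.mem_iUnion, Finset.mem_range] at hx
  obtain ⟨i, hi, r, rfl⟩ := hx
  exact rowB_mem_W A C σ (lt_of_lt_of_le hi h) r

/-- The linear map `v ↦ v ᵥ* A^s`. -/
noncomputable def L (s : ℕ) : (Fin n → ℝ) →ₗ[ℝ] (Fin n → ℝ) :=
  Matrix.mulVecLin ((A ^ s)ᵀ)

lemma rowB_shift {s : ℕ} (hper : ∀ t : ℕ, σ (t + s) = σ t) (i : ℕ) (r : Fin p) :
    rowB A C σ (i + s) r = L A s (rowB A C σ i r) := by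
  simp only [rowB, hper i]
  by_cases h : σ i = true
  · simp only [h, if_true, L, Matrix.mulVecLin_apply, Matrix.mulVec_transpose]
    have : C * A ^ (i + s) = (C * A ^ i) * A ^ s := by rw [pow_add, ← Matrix.mul_assoc]
    rw [this]
    funext k
    simp [Matrix.mul_apply, Matrix.vecMul, dotProduct]
  · simp [h]

lemma L_W_le {s : ℕ} (hper : ∀ t : ℕ, σ (t + s) = σ t) {t0 : ℕ}
    (h : W A C σ (t0 + s) ≤ W A C σ t0) :
    Submodule.map (L A s) (W A C σ t0) ≤ W A C σ t0 := by
  unfold W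
  refine (Submodule.map_span_le _ _ _).mpr ?_
  intro m hm
  simp only [Set.mem_iUnion, Finset.mem_range] at hm
  obtain ⟨i, hi, r, rfl⟩ := hm
  rw [← rowB_shift A C σ hper]
  exact h (rowB_mem_W A C σ (by omega) r)

lemma stab {s : ℕ} (hs : 1 ≤ s) (hper : ∀ t : ℕ, σ (t + s) = σ t) {t0 : ℕ}
    (h : W A C σ (t0 + s) ≤ W A C σ t0) :
    ∀ t, t0 ≤ t → W A C σ t = W A C σ t0 := by
  have key : ∀ t, t0 ≤ t → W A C σ t ≤ W A C σ t0 := by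
    intro t
    induction t using Nat.strong_induction_on with
    | _ t ih =>
      intro _
      apply Submodule.span_le.mpr
      intro x hx
      simp only [Set.mem_iUnion, Finset.mem_range] at hx
      obtain ⟨i, hi, r, rfl⟩ := hx
      by_cases hcase : i < t0 + s
      · exact h (rowB_mem_W A C σ hcase r)
      · push_neg at hcase
        obtain ⟨j, rfl⟩ : ∃ j, i = j + s := ⟨i - s, by omega⟩
        rw [rowB_shift A C σ hper]
        have hmem : rowB A C σ j r ∈ W A C σ t0 :=
          ih (j + 1) (by omega) (by omega) (rowB_mem_W A C σ (by omega) r)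
        exact L_W_le A C σ hper h (Submodule.mem_map_of_mem hmem)
  exact fun t ht => le_antisymm (key t ht) (W_mono A C σ ht)

lemma finrank_W_le (t : ℕ) : Module.finrank ℝ (W A C σ t) ≤ n := by
  have := Submodule.finrank_le (W A C σ t)
  simpa using this

lemma W_eventually_eq {s : ℕ} (hs : 1 ≤ s) (hper : ∀ t : ℕ, σ (t + s) = σ t) :
    ∀ t, s * n ≤ t → W A C σ t = W A C σ (s * n) := by
  by_cases hex : ∃ k < n, W A C σ (k * s + s) ≤ W A C σ (k * s)
  · obtain ⟨k, hk, hle⟩ := hex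
    have hst := stab A C σ hs hper hle
    intro t ht
    have h1 : W A C σ t = W A C σ (k * s) := hst t (by nlinarith)
    have h2 : W A C σ (s * n) = W A C σ (k * s) := hst (s * n) (by nlinarith)
    rw [h1, h2]
  · push_neg at hex
    -- all inclusions strict, so finrank grows; W (s*n) = ⊤
    have hstrict : ∀ k < n, W A C σ (k * s) < W A C σ (k * s + s) := fun k hk =>
      lt_of_le_of_ne (W_mono A C σ (by omega))
        (fun he => hex k hk (le_of_eq he.symm))
    have hrank : ∀ k, k ≤ n → k ≤ Module.finrank ℝ (W A C σ (k * s)) := by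
      intro k
      induction k with
      | zero => intro _; exact Nat.zero_le _
      | succ k ih =>
        intro hk
        have h1 : k ≤ Module.finrank ℝ (W A C σ (k * s)) := ih (by omega)
        have h2 : Module.finrank ℝ (W A C σ (k * s)) <
            Module.finrank ℝ (W A C σ (k * s + s)) :=
          Submodule.finrank_lt_finrank_of_lt (hstrict k (by omega))
        have : (k + 1) * s = k * s + s := by ring
        rw [this]
        omega
    have htop : W A C σ (n * s) = ⊤ := by
      have h1 : n ≤ Module.finrank ℝ (W A C σ (n * s)) := hrank n le_rfl
      have h2 := finrank_W_le A C σ (n * s)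
      apply Submodule.eq_top_of_finrank_eq
      have : Module.finrank ℝ (Fin n → ℝ) = n := by simp
      omega
    intro t ht
    have hns : n * s = s * n := Nat.mul_comm n s
    have h1 : W A C σ t = ⊤ := by
      refine le_antisymm le_top ?_
      rw [← htop]
      exact W_mono A C σ (by omega)
    rw [h1, ← hns, htop]

end PeriodicObsAux


/-- For a periodic signal `σ` with period `s ≥ 1`: the observability matrices are
rank-deficient for all times iff `O_σ(sn)` is rank-deficient; moreover for all `t ≥ sn`
the row span of `O_σ(t)` equals the row span of `O_σ(sn)`. -/
theorem periodic_obsMat_rank {n p : ℕ} (A : Matrix (Fin n) (Fin n) ℝ)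
    (C : Matrix (Fin p) (Fin n) ℝ) (s : ℕ) (hs : 1 ≤ s) (σ : ℕ → Bool)
    (hper : ∀ t : ℕ, σ (t + s) = σ t) :
    ((∀ t : ℕ, (obsMat A C σ t).rank < n) ↔ (obsMat A C σ (s * n)).rank < n) ∧
    ∀ t : ℕ, s * n ≤ t →
      Submodule.span ℝ (Set.range (obsMat A C σ t)) =
      Submodule.span ℝ (Set.range (obsMat A C σ (s * n))) := by
  have hspan := PeriodicObsAux.W_eventually_eq A C σ hs hper
  have hrank : ∀ t, (obsMat A C σ t).rank
      = Module.finrank ℝ (PeriodicObsAux.W A C σ t) := by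
    intro t
    rw [Matrix.rank_eq_finrank_span_row, ← PeriodicObsAux.span_range_eq_W]; rfl
  constructor
  · constructor
    · exact fun h => h (s * n)
    · intro h t
      rcases le_or_gt t (s * n) with hts | hts
      · calc (obsMat A C σ t).rank = _ := hrank t
          _ ≤ Module.finrank ℝ (PeriodicObsAux.W A C σ (s * n)) :=
              Submodule.finrank_mono (PeriodicObsAux.W_mono A C σ hts)
          _ < n := by rw [← hrank]; exact h
      · rw [hrank t, hspan t hts.le, ← hrank]; exact h
  · intro t ht
    rw [PeriodicObsAux.span_range_eq_W, PeriodicObsAux.span_range_eq_W, hspan t ht]
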